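/- Let 𝒜 be a finite set of alternatives and let V be a finite set of valuations v : 𝒜 → ℝ, with a total order ≻ᵛ on V and a total order ≻ᵃ on 𝒜. If V is single-crossing with respect to ≻ᵛ and ≻ᵃ, then every function f : V → 𝒜 that is monotone with respect to ≻ᵛ and ≻ᵃ is implementable. -/

import Mathlib

theorem monotone_implementable_of_single_crossing
    {A V : Type*} [Fintype A] [Fintype V] [LinearOrder A] [LinearOrder V]
    (val : V → A → ℝ)
    (hsc : ∀ v v' : V, v < v' → ∀ a a' : A, a < a' →
      val v a' - val v a ≤ val v' a' - val v' a)
    (f : V → A)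
    (hmono : ∀ v v' : V, v < v' → f v ≤ f v') :
    ∃ P : V → ℝ, ∀ v v' : V, val v (f v') - P v' ≤ val v (f v) - P v := by
  classical
  letI : LocallyFiniteOrder V := Fintype.toLocallyFiniteOrder
  letI : SuccOrder V := LinearLocallyFiniteOrder.succOrder V
  -- weak single crossing
  have hsc' : ∀ v v' : V, v ≤ v' → ∀ a a' : A, a ≤ a' →
      val v a' - val v a ≤ val v' a' - val v' a := by
    intro v v' hv a a' ha
    rcases eq_or_lt_of_le hv with rfl | hv
    · exact le_rfl
    · rcases eq_or_lt_of_le ha with rfl | ha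
      · simp
      · exact hsc v v' hv a a' ha
  have hmono' : ∀ v v' : V, v ≤ v' → f v ≤ f v' := by
    intro v v' h
    rcases eq_or_lt_of_le h with rfl | h
    · exact le_rfl
    · exact hmono v v' h
  set g : V → ℝ := fun u => val (Order.succ u) (f (Order.succ u)) - val (Order.succ u) (f u)
    with hg
  set S : V → V → ℝ := fun v v' => ∑ u ∈ Finset.Ico v v', g u with hS
  have key : ∀ n : ℕ, ∀ v v' : V, (Finset.Ico v v').card = n → v ≤ v' →
      val v (f v') - val v (f v) ≤ S v v' ∧ S v v' ≤ val v' (f v') - val v' (f v) := by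
    intro n
    induction n using Nat.strong_induction_on with
    | _ n ih =>
      intro v v' hcard hvv'
      rcases eq_or_lt_of_le hvv' with rfl | hlt
      · simp [hS]
      · have hnmax : ¬ IsMax v := not_isMax_of_lt hlt
        set u := Order.succ v with hu
        have hvu : v < u := Order.lt_succ_of_not_isMax hnmax
        have huv' : u ≤ v' := Order.succ_le_of_lt hlt
        have hIoo : Finset.Ico u v' = Finset.Ioo v v' := by
          ext x
          simp only [Finset.mem_Ico, Finset.mem_Ioo]
          constructor
          · rintro ⟨h1, h2⟩; exact ⟨lt_of_lt_of_le hvu h1, h2⟩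
          · rintro ⟨h1, h2⟩; exact ⟨Order.succ_le_of_lt h1, h2⟩
        have hsplit : Finset.Ico v v' = insert v (Finset.Ico u v') := by
          rw [hIoo, Finset.Ioo_insert_left hlt]
        have hvnot : v ∉ Finset.Ico u v' := by
          simp [Finset.mem_Ico, hvu.not_ge]
        have hSsplit : S v v' = g v + S u v' := by
          rw [hS]; simp only []
          rw [hsplit, Finset.sum_insert hvnot]
        have hcard' : (Finset.Ico u v').card < n := by
          rw [← hcard, hsplit, Finset.card_insert_of_notMem hvnot]
          omega
        obtain ⟨ihl, ihr⟩ := ih _ hcard' u v' rfl huv'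
        have hfvu : f v ≤ f u := hmono' _ _ hvu.le
        constructor
        · -- lower bound
          have h1 : val v (f u) - val v (f v) ≤ g v := hsc' v u hvu.le _ _ hfvu
          have h2 : val v (f v') - val v (f u) ≤ val u (f v') - val u (f u) :=
            hsc' v u hvu.le _ _ (hmono' _ _ huv')
          have := add_le_add h1 (le_trans h2 ihl)
          rw [hSsplit]; linarith
        · -- upper bound
          have h1 : g v ≤ val v' (f u) - val v' (f v) := hsc' u v' huv' _ _ hfvu
          rw [hSsplit]; linarith
  set P : V → ℝ := fun v => ∑ u ∈ (Finset.univ.filter (fun x => x < v)), g u with hP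
  have hdiff : ∀ v v' : V, v ≤ v' → P v' - P v = S v v' := by
    intro v v' h
    have hunion : (Finset.univ.filter (fun x => x < v')) = (Finset.univ.filter (fun x => x < v)) ∪ Finset.Ico v v' := by
      ext x
      simp only [Finset.mem_filter, Finset.mem_univ, true_and, Finset.mem_union, Finset.mem_Ico]
      constructor
      · intro hx
        rcases lt_or_ge x v with h1 | h1
        · exact Or.inl h1
        · exact Or.inr ⟨h1, hx⟩
      · rintro (h1 | ⟨h1, h2⟩)
        · exact lt_of_lt_of_le h1 h
        · exact h2
    have hdisj : Disjoint ((Finset.univ.filter (fun x => x < v))) (Finset.Ico v v') := by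
      rw [Finset.disjoint_left]
      intro x hx hx'
      simp only [Finset.mem_filter, Finset.mem_univ, true_and] at hx
      simp only [Finset.mem_Ico] at hx'
      exact absurd hx'.1 (not_le_of_gt hx)
    rw [hP, hS]; simp only []
    rw [hunion, Finset.sum_union hdisj]; ring
  refine ⟨P, fun v v' => ?_⟩
  have goal : val v (f v') - val v (f v) ≤ P v' - P v := by
    rcases le_or_gt v v' with h | h
    · rw [hdiff v v' h]
      exact (key _ v v' rfl h).1
    · rw [show P v' - P v = -(S v' v) by rw [← hdiff v' v h.le]; ring]
      have := (key _ v' v rfl h.le).2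
      linarith
  linarith
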